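/- Let X, Y be compact metrizable spaces, p, q ∈ X distinct, z, w ∈ Y, and α ∈ (0,1). Let φ : C(X) → C(Y) be a unital positive linear map sending C(X)_{(p,q,α)} into C(Y)_{(z,w,α)}. Then φ(f)(z) = f(p) and φ(f)(w) = f(q) for all f ∈ C(X). -/

import Mathlib

open ContinuousMap

theorem stmt17 (X Y : Type*) [MetricSpace X] [CompactSpace X]
    [MetricSpace Y] [CompactSpace Y]
    (p q : X) (hpq : p ≠ q) (z w : Y)
    (α : ℝ) (hα : α ∈ Set.Ioo (0 : ℝ) 1)
    (φ : C(X, ℝ) →ₗ[ℝ] C(Y, ℝ))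
    (hunital : φ 1 = 1)
    (hpos : ∀ f : C(X, ℝ), (∀ x, 0 ≤ f x) → ∀ y, 0 ≤ φ f y)
    (hsub : ∀ f : C(X, ℝ), f p = α * f q → φ f z = α * φ f w) :
    ∀ f : C(X, ℝ), φ f z = f p ∧ φ f w = f q := by
  obtain ⟨hα0, hα1⟩ := hα
  have h1α : (1 : ℝ) - α ≠ 0 := by linarith
  -- the key functional relation
  have hrel : ∀ f : C(X, ℝ), φ f z - α * φ f w = f p - α * f q := by
    intro f
    set c : ℝ := (f p - α * f q) / (1 - α) with hcdef
    have hc : c * (1 - α) = f p - α * f q := by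
      rw [hcdef, div_mul_cancel₀ _ h1α]
    have hg : (f - c • (1 : C(X, ℝ))) p = α * ((f - c • (1 : C(X, ℝ))) q) := by
      simp only [ContinuousMap.sub_apply, ContinuousMap.smul_apply,
        ContinuousMap.one_apply, smul_eq_mul, mul_one]
      linear_combination -hc
    have h2 := hsub _ hg
    have hφ : φ (f - c • (1 : C(X, ℝ))) = φ f - c • (1 : C(Y, ℝ)) := by
      rw [map_sub, map_smul, hunital]
    rw [hφ] at h2
    simp only [ContinuousMap.sub_apply, ContinuousMap.smul_apply,
      ContinuousMap.one_apply, smul_eq_mul, mul_one] at h2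
    linear_combination h2 + hc
  -- monotonicity
  have hmono : ∀ f g : C(X, ℝ), (∀ x, f x ≤ g x) → ∀ y, φ f y ≤ φ g y := by
    intro f g h y
    have h0 := hpos (g - f) (fun x => by
      simp only [ContinuousMap.sub_apply]; linarith [h x]) y
    rw [map_sub] at h0
    simp only [ContinuousMap.sub_apply] at h0
    linarith
  -- Urysohn-type function
  have hd : (0 : ℝ) < dist p q := dist_pos.2 hpq
  set u : C(X, ℝ) := ⟨fun x => min (dist x q / dist p q) 1, by
    exact Continuous.min ((Continuous.dist continuous_id continuous_const).div_const _)
      continuous_const⟩ with hudef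
  have hup : u p = 1 := by
    simp [hudef, div_self hd.ne']
  have huq : u q = 0 := by
    simp [hudef]
  have hu0 : ∀ x, 0 ≤ u x := fun x => le_min (by positivity) zero_le_one
  have hu1 : ∀ x, u x ≤ 1 := fun x => min_le_right _ _
  -- key vanishing lemma
  have hMzero : ∀ f : C(X, ℝ), (∀ x, 0 ≤ f x) → f q = 0 → φ f w = 0 := by
    intro f hf hfq
    set C : ℝ := ‖f‖ + 1 with hCdef
    have hC : 0 < C := by positivity
    set g : C(X, ℝ) := C⁻¹ • f with hgdef
    have hgx : ∀ x, g x = C⁻¹ * f x := fun x => rfl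
    have hg0 : ∀ x, 0 ≤ g x := fun x => by
      rw [hgx]; exact mul_nonneg (by positivity) (hf x)
    have hg1 : ∀ x, g x ≤ 1 := fun x => by
      rw [hgx]
      rw [inv_mul_le_one₀ hC]
      have h := f.norm_coe_le_norm x
      have : f x ≤ ‖f‖ := le_trans (le_abs_self _) h
      nlinarith
    have hgq : g q = 0 := by rw [hgx, hfq, mul_zero]
    set G : C(X, ℝ) := g ⊔ u with hGdef
    have hGx : ∀ x, G x = max (g x) (u x) := fun x => rfl
    have hGp : G p = 1 := by
      rw [hGx, hup]
      exact max_eq_right (hg1 p)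
    have hGq : G q = 0 := by rw [hGx, hgq, huq, max_self]
    have hGle1 : ∀ x, G x ≤ 1 := fun x => by
      rw [hGx]; exact max_le (hg1 x) (hu1 x)
    have hG0 : ∀ x, 0 ≤ G x := fun x => le_trans (hg0 x) (le_max_left _ _)
    have hrelG := hrel G
    rw [hGp, hGq] at hrelG
    have hLG : φ G z ≤ 1 := by
      have := hmono G 1 (fun x => by simpa using hGle1 x) z
      rwa [hunital] at this
    have hMG0 : 0 ≤ φ G w := hpos G hG0 w
    have hMG : φ G w = 0 := by nlinarith
    have hgG : φ g w ≤ 0 := by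
      have := hmono g G (fun x => by rw [hGx]; exact le_max_left _ _) w
      linarith
    have hg0' : 0 ≤ φ g w := hpos g hg0 w
    have hgw : φ g w = 0 := le_antisymm hgG hg0'
    have : φ f = C • φ g := by
      rw [hgdef, map_smul, smul_smul, mul_inv_cancel₀ hC.ne', one_smul]
    rw [this]
    simp [hgw]
  intro f
  -- M f = f q
  have hM : φ f w = f q := by
    set g : C(X, ℝ) := f - f q • (1 : C(X, ℝ)) with hgdef
    have hgx : ∀ x, g x = f x - f q := fun x => by
      simp [hgdef]
    have hgq : g q = 0 := by rw [hgx]; ring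
    set gp : C(X, ℝ) := g ⊔ 0 with hgpdef
    set gm : C(X, ℝ) := (-g) ⊔ 0 with hgmdef
    have hgpx : ∀ x, gp x = max (g x) 0 := fun x => rfl
    have hgmx : ∀ x, gm x = max (-g x) 0 := fun x => rfl
    have hgp0 : ∀ x, 0 ≤ gp x := fun x => le_max_right _ _
    have hgm0 : ∀ x, 0 ≤ gm x := fun x => le_max_right _ _
    have hgpq : gp q = 0 := by rw [hgpx, hgq, max_self]
    have hgmq : gm q = 0 := by rw [hgmx, hgq, neg_zero, max_self]
    have hsplit : g = gp - gm := by
      ext x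
      simp only [ContinuousMap.sub_apply, hgpx, hgmx]
      rcases le_total (g x) 0 with h | h
      · rw [max_eq_right h, max_eq_left (by linarith)]; ring
      · rw [max_eq_left h, max_eq_right (by linarith)]; ring
    have h1 := hMzero gp hgp0 hgpq
    have h2 := hMzero gm hgm0 hgmq
    have hφg : φ g w = 0 := by
      rw [hsplit, map_sub]
      simp [ContinuousMap.sub_apply, h1, h2]
    rw [hgdef, map_sub, map_smul, hunital] at hφg
    simp only [ContinuousMap.sub_apply, ContinuousMap.smul_apply,
      ContinuousMap.one_apply, smul_eq_mul, mul_one] at hφg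
    linarith
  have hL : φ f z = f p := by
    have := hrel f
    rw [hM] at this
    linarith
  exact ⟨hL, hM⟩
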